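/- Let N ≥ 2, let x ∈ ℝ^N be a vector such that x_i ∈ [0,1] for every index i ≠ l, and let y be the vector obtained from x by replacing the l-th coordinate by its truncation to [0,1], i.e. y_l = max(0, min(x_l, 1)) and y_i = x_i for i ≠ l. Then the sample variance of y is at most the sample variance of x: S²(y) ≤ S²(x). -/

import Mathlib

open scoped BigOperators

/-- Sample variance of a vector `x ∈ ℝ^N`:
`S²(x) = (1/(N-1)) * (∑ i, x i ^ 2 - (∑ i, x i)^2 / N)`. -/
noncomputable def sampleVar {N : ℕ} (x : Fin N → ℝ) : ℝ :=
  (1 / ((N : ℝ) - 1)) * (∑ i, x i ^ 2 - (∑ i, x i) ^ 2 / N)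

/-- Truncating one coordinate of a vector (whose other coordinates lie in `[0,1]`) to the
interval `[0,1]` does not increase the sample variance. -/
theorem stmt7 {N : ℕ} (hN : 2 ≤ N) (x : Fin N → ℝ) (l : Fin N)
    (hx : ∀ i, i ≠ l → x i ∈ Set.Icc (0 : ℝ) 1) :
    sampleVar (Function.update x l (max 0 (min (x l) 1))) ≤ sampleVar x := by
  set t := x l with ht
  set c := max 0 (min t 1) with hc
  set S := ∑ i ∈ Finset.univ.erase l, x i with hS
  set Q := ∑ i ∈ Finset.univ.erase l, x i ^ 2 with hQ
  have hNR : (2:ℝ) ≤ (N:ℝ) := by exact_mod_cast hN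
  have hNpos : (0:ℝ) < (N:ℝ) := by linarith
  have hcard : (Finset.univ.erase l).card = N - 1 := by
    rw [Finset.card_erase_of_mem (Finset.mem_univ l), Finset.card_univ, Fintype.card_fin]
  have hcardR : ((Finset.univ.erase l).card : ℝ) = (N:ℝ) - 1 := by
    rw [hcard]; push_cast [Nat.cast_sub (by omega : 1 ≤ N)]; ring
  have hS0 : 0 ≤ S := Finset.sum_nonneg fun i hi =>
    (hx i (Finset.ne_of_mem_erase hi)).1
  have hS1 : S ≤ (N:ℝ) - 1 := by
    calc S ≤ ∑ _i ∈ Finset.univ.erase l, (1:ℝ) :=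
          Finset.sum_le_sum fun i hi => (hx i (Finset.ne_of_mem_erase hi)).2
      _ = (N:ℝ) - 1 := by rw [Finset.sum_const, nsmul_eq_mul, mul_one, hcardR]
  have hsumx : ∑ i, x i = t + S := by
    rw [hS, ht, Finset.add_sum_erase _ x (Finset.mem_univ l)]
  have hsumx2 : ∑ i, x i ^ 2 = t ^ 2 + Q := by
    rw [hQ, ht, Finset.add_sum_erase _ (fun i => x i ^ 2) (Finset.mem_univ l)]
  have hsumy : ∑ i, Function.update x l c i = c + S := by
    rw [Finset.sum_update_of_mem (Finset.mem_univ l), hS, Finset.sdiff_singleton_eq_erase]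
  have hsumy2 : ∑ i, Function.update x l c i ^ 2 = c ^ 2 + Q := by
    have : ∀ i, Function.update x l c i ^ 2 = Function.update (fun j => x j ^ 2) l (c ^ 2) i := by
      intro i
      rcases eq_or_ne i l with rfl | h
      · simp
      · simp [Function.update_of_ne h]
    rw [Finset.sum_congr rfl fun i _ => this i,
      Finset.sum_update_of_mem (Finset.mem_univ l), hQ, Finset.sdiff_singleton_eq_erase]
  clear_value t c S Q
  unfold sampleVar
  rw [hsumx, hsumx2, hsumy, hsumy2]
  have hcoef : 0 ≤ 1 / ((N:ℝ) - 1) := div_nonneg zero_le_one (by linarith)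
  apply mul_le_mul_of_nonneg_left _ hcoef
  have key : c ^ 2 - (c + S) ^ 2 / N ≤ t ^ 2 - (t + S) ^ 2 / N := by
    rw [← mul_le_mul_iff_of_pos_left hNpos]
    have e1 : (N:ℝ) * (c ^ 2 - (c + S) ^ 2 / N) = N * c ^ 2 - (c + S) ^ 2 := by
      field_simp
    have e2 : (N:ℝ) * (t ^ 2 - (t + S) ^ 2 / N) = N * t ^ 2 - (t + S) ^ 2 := by
      field_simp
    rw [e1, e2]
    rcases le_total t 0 with h0 | h0
    · have hcv : c = 0 := by
        rw [hc, min_eq_left (h0.trans zero_le_one), max_eq_left h0]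
      rw [hcv]
      nlinarith [mul_nonneg (neg_nonneg.2 h0) hS0,
        mul_nonneg (by linarith : (0:ℝ) ≤ (N:ℝ) - 1) (sq_nonneg t), sq_nonneg t]
    rcases le_total t 1 with h1 | h1
    · have hcv : c = t := by rw [hc, min_eq_left h1, max_eq_right h0]
      rw [hcv]
    · have hcv : c = 1 := by
        rw [hc, min_eq_right h1]; exact max_eq_right zero_le_one
      rw [hcv]
      have hin : 0 ≤ ((N:ℝ) - 1) * (t + 1) - 2 * S := by
        nlinarith [mul_le_mul_of_nonneg_left (by linarith : (2:ℝ) ≤ t + 1)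
          (by linarith : (0:ℝ) ≤ (N:ℝ) - 1)]
      nlinarith [mul_nonneg (sub_nonneg.2 h1) hin]
  linarith [key]
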